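/- Let H = (V, E) be a hypergraph of degree 2 equipped with maps i_1, i_2 : V → E such that i_1(v) ≠ i_2(v) and v ∈ i_1(v) ∩ i_2(v) for every v. For inputs α : V → {0,1} and β : E → {0,1}, define a 'homomorphism instance' as a map h : E → {a} ∪ {w_e : e ∈ E} such that for every v ∈ V: either h(i_1(v)) = h(i_2(v)) = a and α(v) = 1, or there exists e ∈ {i_1(v), i_2(v)} with h(e) = w_e, β(e) = 1, and h(e') = a for the other element e' of {i_1(v), i_2(v)}. Then such an h exists if and only if there is an independent subset X ⊆ E with β(e) = 1 for all e ∈ X and α(v) = 1 for all v not covered by X. -/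

import Mathlib

/-- `v` is covered by the set `X` of hyperedges (recall `v` belongs exactly to
the hyperedges `i1 v` and `i2 v`). -/
def CoveredBy {V E : Type} (i1 i2 : V → E) (X : Set E) (v : V) : Prop :=
  i1 v ∈ X ∨ i2 v ∈ X

/-- `X` is independent: distinct hyperedges of `X` share no vertex. -/
def IndepBy {V E : Type} (i1 i2 : V → E) (X : Set E) : Prop :=
  ∀ e ∈ X, ∀ e' ∈ X, e ≠ e' → ∀ v : V,
    ¬((i1 v = e ∨ i2 v = e) ∧ (i1 v = e' ∨ i2 v = e'))

/-- A 'homomorphism instance' `h : E → Option E`, where `none` stands for the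
individual `a` and `some e` for the labelled null `w_e`: for every vertex `v`,
either both its hyperedges are mapped to `a` and `α v = 1`, or exactly one of
them, `e`, is mapped to `w_e` with `β e = 1`, the other being mapped to `a`. -/
def HomInst {V E : Type} (i1 i2 : V → E) (α : V → Bool) (β : E → Bool)
    (h : E → Option E) : Prop :=
  ∀ v : V,
    (h (i1 v) = none ∧ h (i2 v) = none ∧ α v = true) ∨
    (∃ e : E, (e = i1 v ∨ e = i2 v) ∧ h e = some e ∧ β e = true ∧
      ∀ e' : E, (e' = i1 v ∨ e' = i2 v) → e' ≠ e → h e' = none)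

/-- For a degree-2 hypergraph (every `v` lies in exactly the two hyperedges
`i1 v ≠ i2 v`), a homomorphism instance exists iff there is an independent
`X ⊆ E` with `β e = 1` on `X` and `α v = 1` for every uncovered vertex. -/
theorem stmt_10 {V E : Type} (i1 i2 : V → E) (hne : ∀ v : V, i1 v ≠ i2 v)
    (α : V → Bool) (β : E → Bool) :
    (∃ h : E → Option E, HomInst i1 i2 α β h) ↔
    (∃ X : Set E, IndepBy i1 i2 X ∧ (∀ e ∈ X, β e = true) ∧
      ∀ v : V, ¬ CoveredBy i1 i2 X v → α v = true) := by
  constructor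
  · rintro ⟨h, hh⟩
    refine ⟨{e | h e = some e ∧ β e = true}, ?_, fun e he => he.2, ?_⟩
    · rintro e ⟨he, -⟩ e' ⟨he', -⟩ hee v ⟨hv, hv'⟩
      rcases hh v with ⟨h1, h2, -⟩ | ⟨e₀, he₀, hsome, -, hrest⟩
      · rcases hv with rfl | rfl
        · rw [h1] at he; exact absurd he.symm (Option.some_ne_none _)
        · rw [h2] at he; exact absurd he.symm (Option.some_ne_none _)
      · -- e and e' distinct, both in {i1 v, i2 v}; one of them ≠ e₀
        by_cases h1 : e = e₀
        · subst h1
          have := hrest e' (by tauto) (Ne.symm hee)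
          rw [this] at he'; exact absurd he'.symm (Option.some_ne_none _)
        · have := hrest e (by tauto) h1
          rw [this] at he; exact absurd he.symm (Option.some_ne_none _)
    · intro v hv
      rcases hh v with ⟨-, -, ha⟩ | ⟨e₀, he₀, hsome, hβ₀, -⟩
      · exact ha
      · exfalso; apply hv
        rcases he₀ with rfl | rfl
        · exact Or.inl ⟨hsome, hβ₀⟩
        · exact Or.inr ⟨hsome, hβ₀⟩
  · rintro ⟨X, hind, hβ, hcov⟩
    classical
    refine ⟨fun e => if e ∈ X then some e else none, fun v => ?_⟩
    by_cases h1 : i1 v ∈ X <;> by_cases h2 : i2 v ∈ X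
    · exact absurd ⟨Or.inl rfl, Or.inr rfl⟩ (hind _ h1 _ h2 (hne v) v)
    · refine Or.inr ⟨i1 v, Or.inl rfl, by simp [h1], hβ _ h1, ?_⟩
      rintro e' (rfl | rfl) hne'
      · exact absurd rfl hne'
      · simp [h2]
    · refine Or.inr ⟨i2 v, Or.inr rfl, by simp [h2], hβ _ h2, ?_⟩
      rintro e' (rfl | rfl) hne'
      · simp [h1]
      · exact absurd rfl hne'
    · exact Or.inl ⟨by simp [h1], by simp [h2], hcov v (by rintro (h|h) <;> tauto)⟩
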